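/- Let p_1 < p_2 < ... be the primes in ascending order and define π_k(n) := #{m : 2 ≤ m ≤ n such that for every l with 1 ≤ l ≤ k it is not the case that p_l divides m and p_l² ≤ m}. Then for every k ≥ 1, π_k(n)/n tends to ∏_{l=1}^{k} (1 − 1/p_l) as n → ∞. -/

import Mathlib

open Filter

open Classical in
/-- `π_k(n)`: the number of integers `m` with `2 ≤ m ≤ n` passing all `k`
sieving conditions, where the condition for the `l`-th prime
`p_l = Nat.nth Nat.Prime (l - 1)` holds at `m` when `p_l ∣ m` and `p_l² ≤ m`. -/
noncomputable def piK (k n : ℕ) : ℕ :=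
  ((Finset.Icc 2 n).filter (fun m => ∀ l ∈ Finset.Icc 1 k,
    ¬(Nat.nth Nat.Prime (l - 1) ∣ m ∧ (Nat.nth Nat.Prime (l - 1)) ^ 2 ≤ m))).card

open Finset

private lemma nthp_prime (i : ℕ) : (Nat.nth Nat.Prime i).Prime :=
  Nat.prime_nth_prime i

private lemma nthp_ne {i j : ℕ} (h : i ≠ j) :
    Nat.nth Nat.Prime i ≠ Nat.nth Nat.Prime j :=
  fun he => h (Nat.nth_injective Nat.infinite_setOf_prime he)

private noncomputable def Q (k : ℕ) : ℕ := ∏ i ∈ range k, Nat.nth Nat.Prime i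

private lemma Q_pos (k : ℕ) : 0 < Q k :=
  Finset.prod_pos fun i _ => (nthp_prime i).pos

private lemma totient_Q (k : ℕ) :
    (Q k).totient = ∏ i ∈ range k, (Nat.nth Nat.Prime i - 1) := by
  induction k with
  | zero => simp [Q]
  | succ k ih =>
    have hcop : (Q k).Coprime (Nat.nth Nat.Prime k) := by
      apply Nat.Coprime.prod_left
      intro i hi
      exact (Nat.coprime_primes (nthp_prime i) (nthp_prime k)).2
        (nthp_ne (mem_range.1 hi).ne)
    rw [Q, prod_range_succ, ← Q, Nat.totient_mul hcop, ih,
      Nat.totient_prime (nthp_prime k), prod_range_succ]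

private lemma ratio_Q (k : ℕ) :
    ((Q k).totient : ℝ) / (Q k : ℝ) =
      ∏ i ∈ range k, (1 - 1 / (Nat.nth Nat.Prime i : ℝ)) := by
  have h0 : ∀ i : ℕ, (Nat.nth Nat.Prime i : ℝ) ≠ 0 := fun i =>
    Nat.cast_ne_zero.2 (nthp_prime i).pos.ne'
  rw [totient_Q, Q]
  push_cast
  rw [← Finset.prod_div_distrib]
  apply Finset.prod_congr rfl
  intro i _
  rw [Nat.cast_sub (nthp_prime i).one_lt.le, sub_div, div_self (h0 i)]
  norm_num

private lemma reindex (f : ℕ → ℝ) (k : ℕ) :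
    ∏ l ∈ Icc 1 k, f (l - 1) = ∏ i ∈ range k, f i := by
  rw [show Icc 1 k = image (· + 1) (range k) by
    ext x
    simp only [mem_Icc, mem_image, mem_range]
    constructor
    · rintro ⟨h1, h2⟩; exact ⟨x - 1, by omega, by omega⟩
    · rintro ⟨a, ha, rfl⟩; omega]
  rw [prod_image (fun a _ b _ h => by omega)]
  simp

private lemma count_mul (q j : ℕ) :
    ((range (q * j)).filter q.Coprime).card = j * q.totient := by
  induction j with
  | zero => simp
  | succ j ih =>
    have hsplit : range (q * (j + 1)) = range (q * j) ∪ Ico (q * j) (q * j + q) := by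
      rw [range_eq_Ico, range_eq_Ico, Finset.Ico_union_Ico_eq_Ico (Nat.zero_le _)
        (Nat.le_add_right _ _), Nat.mul_succ]
    have hdisj : Disjoint ((range (q * j)).filter q.Coprime)
        ((Ico (q * j) (q * j + q)).filter q.Coprime) := by
      apply Disjoint.mono (filter_subset _ _) (filter_subset _ _)
      rw [range_eq_Ico]
      exact Finset.Ico_disjoint_Ico_consecutive 0 (q * j) (q * j + q)
    rw [hsplit, filter_union, card_union_of_disjoint hdisj, ih,
      Nat.filter_coprime_Ico_eq_totient q (q * j)]
    ring

private lemma count_mono (q : ℕ) {n m : ℕ} (h : n ≤ m) :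
    ((range n).filter q.Coprime).card ≤ ((range m).filter q.Coprime).card :=
  card_le_card (filter_subset_filter _ (range_subset_range.2 h))

/-- The asymptotic density of the integers relatively prime (in the sieving sense)
to the first `k` primes is `∏_{l=1}^{k} (1 - 1/p_l)`. -/
theorem density_sieved_by_first_k_primes (k : ℕ) (hk : 1 ≤ k) :
    Tendsto (fun n : ℕ => (piK k n : ℝ) / n) atTop
      (nhds (∏ l ∈ Finset.Icc 1 k, (1 - 1 / (Nat.nth Nat.Prime (l - 1) : ℝ)))) := by
  classical
  set q : ℕ := Q k with hq
  set φ : ℕ := q.totient with hφ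
  have hq0 : 0 < q := Q_pos k
  have hq1 : q ≠ 1 := by
    intro h1
    have hdvd : Nat.nth Nat.Prime 0 ∣ q := dvd_prod_of_mem _ (mem_range.2 hk)
    have := Nat.le_of_dvd (h1 ▸ Nat.one_pos) hdvd
    have := (nthp_prime 0).two_le
    omega
  -- rewrite the limit value
  have hval : (∏ l ∈ Finset.Icc 1 k, (1 - 1 / (Nat.nth Nat.Prime (l - 1) : ℝ)))
      = (φ : ℝ) / q := by
    rw [reindex (fun i => 1 - 1 / (Nat.nth Nat.Prime i : ℝ)) k, hφ, hq, ratio_Q]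
  rw [hval]
  set M : ℕ := (Nat.nth Nat.Prime (k - 1)) ^ 2 with hM
  set A : ℕ → ℕ := fun n => ((Icc 2 n).filter q.Coprime).card with hA
  set F : ℕ → ℕ := fun n => ((range n).filter q.Coprime).card with hF
  -- coprime implies sieving condition
  have hcop_cond : ∀ m : ℕ, q.Coprime m → ∀ l ∈ Finset.Icc 1 k,
      ¬(Nat.nth Nat.Prime (l - 1) ∣ m ∧ (Nat.nth Nat.Prime (l - 1)) ^ 2 ≤ m) := by
    intro m hm l hl hbad
    have hlk : l - 1 ∈ range k := by simp only [mem_Icc] at hl; simp; omega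
    have hdvdq : Nat.nth Nat.Prime (l - 1) ∣ q := dvd_prod_of_mem _ hlk
    have : (Nat.nth Nat.Prime (l - 1)).Coprime m := Nat.Coprime.coprime_dvd_left hdvdq hm
    exact ((nthp_prime (l - 1)).coprime_iff_not_dvd.1 this) hbad.1
  -- sieving condition implies coprime for large m
  have hcond_cop : ∀ m : ℕ, M ≤ m → (∀ l ∈ Finset.Icc 1 k,
      ¬(Nat.nth Nat.Prime (l - 1) ∣ m ∧ (Nat.nth Nat.Prime (l - 1)) ^ 2 ≤ m)) →
      q.Coprime m := by
    intro m hMm hm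
    rw [hq, Q]
    apply Nat.Coprime.prod_left
    intro i hi
    rw [Nat.Prime.coprime_iff_not_dvd (nthp_prime i)]
    intro hdvd
    have hik : i + 1 ∈ Finset.Icc 1 k := by simp at hi ⊢; omega
    have := hm (i + 1) hik
    simp only [Nat.add_sub_cancel] at this
    apply this
    refine ⟨hdvd, ?_⟩
    calc (Nat.nth Nat.Prime i) ^ 2 ≤ (Nat.nth Nat.Prime (k - 1)) ^ 2 := by
          apply Nat.pow_le_pow_left
          exact Nat.nth_monotone Nat.infinite_setOf_prime (by simp at hi; omega)
      _ ≤ m := hMm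
  -- key1 : A n ≤ piK k n
  have key1 : ∀ n, A n ≤ piK k n := by
    intro n
    apply card_le_card
    intro m hm
    simp only [mem_filter, mem_Icc] at hm ⊢
    exact ⟨hm.1, fun l hl => hcop_cond m hm.2 l (mem_Icc.mpr hl)⟩
  -- key2 : piK k n ≤ A n + M
  have key2 : ∀ n, piK k n ≤ A n + M := by
    intro n
    have hsub : ((Finset.Icc 2 n).filter (fun m => ∀ l ∈ Finset.Icc 1 k,
        ¬(Nat.nth Nat.Prime (l - 1) ∣ m ∧ (Nat.nth Nat.Prime (l - 1)) ^ 2 ≤ m)))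
        ⊆ ((Icc 2 n).filter q.Coprime) ∪ range M := by
      intro m hm
      simp only [mem_filter, mem_Icc] at hm
      by_cases hlt : m < M
      · exact mem_union_right _ (mem_range.2 hlt)
      · exact mem_union_left _ (by
          simp only [mem_filter, mem_Icc]
          exact ⟨hm.1, hcond_cop m (le_of_not_gt hlt)
            (fun l hl => hm.2 l (mem_Icc.mp hl))⟩)
    calc piK k n ≤ (((Icc 2 n).filter q.Coprime) ∪ range M).card :=
          card_le_card hsub
      _ ≤ A n + M := by
          have := card_union_le ((Icc 2 n).filter q.Coprime) (range M)
          simpa using this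
  -- key3 : F (n+1) = A n + 1 for n ≥ 1
  have key3 : ∀ n, 1 ≤ n → F (n + 1) = A n + 1 := by
    intro n hn
    have hset : (range (n + 1)).filter q.Coprime =
        insert 1 ((Icc 2 n).filter q.Coprime) := by
      ext x
      simp only [mem_filter, mem_range, mem_insert, mem_Icc]
      constructor
      · rintro ⟨hx, hc⟩
        rcases Nat.lt_or_ge x 2 with h2 | h2
        · interval_cases x
          · exfalso; exact hq1 (Nat.coprime_zero_right q |>.1 hc)
          · left; rfl
        · right; exact ⟨⟨h2, by omega⟩, hc⟩
      · rintro (rfl | ⟨⟨h2, hxn⟩, hc⟩)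
        · exact ⟨by omega, Nat.coprime_one_right q⟩
        · exact ⟨by omega, hc⟩
    have hnot : (1 : ℕ) ∉ (Icc 2 n).filter q.Coprime := by
      simp [mem_filter, mem_Icc]
    rw [hF, hA]
    simp only
    rw [hset, card_insert_of_notMem hnot]
  -- bounds on F
  have hFlow : ∀ n : ℕ, (n / q) * φ ≤ F n := by
    intro n
    calc (n / q) * φ = ((range (q * (n / q))).filter q.Coprime).card :=
          (count_mul q (n / q)).symm
      _ ≤ F n := count_mono q (by rw [mul_comm]; exact Nat.div_mul_le_self n q)
  have hFupp : ∀ n : ℕ, F n ≤ (n / q + 1) * φ := by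
    intro n
    have hn : n ≤ q * (n / q + 1) := by
      have h1 := Nat.div_add_mod n q
      have h2 := Nat.mod_lt n hq0
      calc n = q * (n / q) + n % q := h1.symm
        _ ≤ q * (n / q) + q := by omega
        _ = q * (n / q + 1) := by ring
    calc F n ≤ ((range (q * (n / q + 1))).filter q.Coprime).card := count_mono q hn
      _ = (n / q + 1) * φ := count_mul q (n / q + 1)
  -- combined natural number bounds
  have hlow : ∀ n : ℕ, 1 ≤ n → (n / q) * φ ≤ piK k n + 1 := by
    intro n hn
    calc (n / q) * φ ≤ ((n + 1) / q) * φ :=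
          Nat.mul_le_mul_right _ (Nat.div_le_div_right (by omega))
      _ ≤ F (n + 1) := hFlow (n + 1)
      _ = A n + 1 := key3 n hn
      _ ≤ piK k n + 1 := by have := key1 n; omega
  have hupp : ∀ n : ℕ, 1 ≤ n → piK k n ≤ (n / q) * φ + (2 * φ + M) := by
    intro n hn
    have h1 : (n + 1) / q ≤ n / q + 1 := by
      calc (n + 1) / q ≤ (n + q) / q := Nat.div_le_div_right (by omega)
        _ = n / q + 1 := Nat.add_div_right n hq0
    calc piK k n ≤ A n + M := key2 n
      _ ≤ F (n + 1) + M := by have := key3 n hn; omega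
      _ ≤ ((n + 1) / q + 1) * φ + M := by have := hFupp (n + 1); omega
      _ ≤ (n / q + 2) * φ + M := by
          have : (n + 1) / q + 1 ≤ n / q + 2 := by omega
          exact Nat.add_le_add_right (Nat.mul_le_mul_right _ this) M
      _ = (n / q) * φ + (2 * φ + M) := by ring
  -- the limit of the floor-division ratio
  have hq0' : (0 : ℝ) < q := by exact_mod_cast hq0
  have hdiv : Tendsto (fun n : ℕ => ((n / q : ℕ) : ℝ) / n) atTop (nhds (1 / q)) := by
    have hlo : Tendsto (fun n : ℕ => 1 / (q : ℝ) - 1 / n) atTop (nhds (1 / q)) := by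
      have := (tendsto_const_nhds (x := 1 / (q : ℝ)) (f := (atTop : Filter ℕ))).sub
        tendsto_one_div_atTop_nhds_zero_nat
      simpa using this
    apply tendsto_of_tendsto_of_tendsto_of_le_of_le' hlo tendsto_const_nhds
    · filter_upwards [eventually_ge_atTop 1] with n hn
      have hn0 : (0 : ℝ) < n := by exact_mod_cast hn
      rw [div_sub_div _ _ hq0'.ne' hn0.ne', div_le_div_iff₀ (by positivity) hn0]
      have hcast : (n : ℝ) ≤ q * ((n / q : ℕ) : ℝ) + q := by
        have h1 := Nat.div_add_mod n q
        have h2 := Nat.mod_lt n hq0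
        have : (n : ℕ) ≤ q * (n / q) + q := by omega
        exact_mod_cast this
      nlinarith [hn0, hq0']
    · filter_upwards [eventually_ge_atTop 1] with n hn
      have hn0 : (0 : ℝ) < n := by exact_mod_cast hn
      rw [div_le_div_iff₀ hn0 hq0']
      have : (n / q) * q ≤ n := Nat.div_mul_le_self n q
      have hcast : ((n / q : ℕ) : ℝ) * q ≤ n := by exact_mod_cast this
      linarith
  -- lower and upper real bounding functions
  have hlowlim : Tendsto (fun n : ℕ => (((n / q : ℕ) : ℝ) * φ - 1) / n) atTop
      (nhds ((φ : ℝ) / q)) := by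
    have h1 : Tendsto (fun n : ℕ => ((n / q : ℕ) : ℝ) / n * φ - 1 / n) atTop
        (nhds (1 / q * φ - 0)) :=
      (hdiv.mul_const _).sub tendsto_one_div_atTop_nhds_zero_nat
    have h2 : (1 : ℝ) / q * φ - 0 = (φ : ℝ) / q := by ring
    rw [h2] at h1
    apply h1.congr'
    filter_upwards [eventually_ge_atTop 1] with n hn
    have hn0 : (n : ℝ) ≠ 0 := by positivity
    field_simp
  have hupplim : Tendsto (fun n : ℕ => (((n / q : ℕ) : ℝ) * φ + (2 * φ + M)) / n) atTop
      (nhds ((φ : ℝ) / q)) := by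
    have h1 : Tendsto (fun n : ℕ => ((n / q : ℕ) : ℝ) / n * φ + (2 * φ + M) * (1 / n))
        atTop (nhds (1 / q * φ + (2 * (φ : ℝ) + M) * 0)) :=
      (hdiv.mul_const _).add (tendsto_one_div_atTop_nhds_zero_nat.const_mul _)
    have h2 : (1 : ℝ) / q * φ + (2 * (φ : ℝ) + M) * 0 = (φ : ℝ) / q := by ring
    rw [h2] at h1
    apply h1.congr'
    filter_upwards [eventually_ge_atTop 1] with n hn
    have hn0 : (n : ℝ) ≠ 0 := by positivity
    field_simp
  apply tendsto_of_tendsto_of_tendsto_of_le_of_le' hlowlim hupplim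
  · filter_upwards [eventually_ge_atTop 1] with n hn
    have hn0 : (0 : ℝ) ≤ n := by positivity
    have h := hlow n hn
    have hcast : ((n / q : ℕ) : ℝ) * φ - 1 ≤ (piK k n : ℝ) := by
      have h' : (((n / q) * φ : ℕ) : ℝ) ≤ ((piK k n + 1 : ℕ) : ℝ) := by exact_mod_cast h
      push_cast at h'
      linarith
    gcongr
  · filter_upwards [eventually_ge_atTop 1] with n hn
    have hn0 : (0 : ℝ) ≤ n := by positivity
    have h := hupp n hn
    have hcast : (piK k n : ℝ) ≤ ((n / q : ℕ) : ℝ) * φ + (2 * φ + M) := by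
      have h' : ((piK k n : ℕ) : ℝ) ≤ (((n / q) * φ + (2 * φ + M) : ℕ) : ℝ) := by
        exact_mod_cast h
      push_cast at h'
      linarith
    gcongr
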